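/- In a finite Markov chain, the probability (from any state y) of visiting a set F of states infinitely often equals the probability of eventually reaching the union U of all bottom strongly connected components B with B ∩ F ≠ ∅: Pr(y ⊨ GF F) = Pr(y ⊨ F U). -/

import Mathlib

open scoped ENNReal

set_option linter.unusedSectionVars false
set_option linter.unusedVariables false
open scoped ENNReal
open MeasureTheory

namespace MC14
variable {Y : Type*} [Fintype Y] [DecidableEq Y] [MeasurableSpace Y] [MeasurableSingletonClass Y]
variable (τ : Y → Y → ℝ≥0∞)

noncomputable def Av (b : Y) : ℕ → Y → ℝ≥0∞
  | 0, _ => 1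
  | (k+1), s => ∑ y' : Y, if y' = b then 0 else τ s y' * Av b k y'

@[simp] lemma Av_zero (b s : Y) : Av τ b 0 s = 1 := rfl
lemma Av_succ (b s : Y) (k : ℕ) :
    Av τ b (k+1) s = ∑ y' : Y, if y' = b then 0 else τ s y' * Av τ b k y' := rfl

lemma sum_ite_erase (f : Y → ℝ≥0∞) (b : Y) :
    ∑ y' : Y, (if y' = b then 0 else f y') = ∑ y' ∈ Finset.univ.erase b, f y' := by
  rw [← Finset.add_sum_erase Finset.univ _ (Finset.mem_univ b), if_pos rfl, zero_add]
  exact Finset.sum_congr rfl fun y' hy' => if_neg (Finset.ne_of_mem_erase hy')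

lemma tau_le_one (hτ : ∀ y, ∑ y' : Y, τ y y' = 1) (s u : Y) : τ s u ≤ 1 :=
  (hτ s) ▸ Finset.single_le_sum (f := τ s) (fun _ _ => zero_le) (Finset.mem_univ u)

lemma Av_le_one (hτ : ∀ y, ∑ y' : Y, τ y y' = 1) (b : Y) : ∀ k s, Av τ b k s ≤ 1 := by
  intro k
  induction k with
  | zero => intro s; simp
  | succ k ih =>
    intro s
    rw [Av_succ, sum_ite_erase]
    calc ∑ y' ∈ Finset.univ.erase b, τ s y' * Av τ b k y'
        ≤ ∑ y' ∈ Finset.univ.erase b, τ s y' := by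
          apply Finset.sum_le_sum
          intro y' _
          calc τ s y' * Av τ b k y' ≤ τ s y' * 1 := by gcongr; exact ih y'
            _ = τ s y' := mul_one _
      _ ≤ ∑ y' : Y, τ s y' := Finset.sum_le_sum_of_subset (Finset.subset_univ _)
      _ = 1 := hτ s

lemma wt_le_one (hτ : ∀ y, ∑ y' : Y, τ y y' = 1) (e : ℕ → Y) (k : ℕ) : ∏ i ∈ Finset.range k, τ (e i) (e (i+1)) ≤ 1 :=
  Finset.prod_le_one (fun _ _ => zero_le) (fun i _ => tau_le_one τ hτ _ _)

lemma av_add_wt_le_one (hτ : ∀ y, ∑ y' : Y, τ y y' = 1) (b : Y) :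
    ∀ k, 1 ≤ k → ∀ e : ℕ → Y, e k = b →
      Av τ b k (e 0) + ∏ i ∈ Finset.range k, τ (e i) (e (i+1)) ≤ 1 := by
  intro k hk
  induction k, hk using Nat.le_induction with
  | base =>
    intro e he1
    rw [Finset.prod_range_one, he1]
    rw [Av_succ]
    have h1 : ∀ y' : Y, (if y' = b then 0 else τ (e 0) y' * Av τ b 0 y')
        = (if y' = b then 0 else τ (e 0) y') := by
      intro y'; by_cases hb : y' = b <;> simp [hb]
    rw [Finset.sum_congr rfl fun y' _ => h1 y', sum_ite_erase, add_comm,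
      Finset.add_sum_erase _ _ (Finset.mem_univ b)]
    exact (hτ _).le
  | succ k hk ih =>
    intro e he
    have hwt : ∏ i ∈ Finset.range (k+1), τ (e i) (e (i+1))
        = τ (e 0) (e 1) * ∏ i ∈ Finset.range k, τ (e (i+1)) (e (i+1+1)) := by
      rw [Finset.prod_range_succ' (fun i => τ (e i) (e (i+1))) k, mul_comm]
    have hih : Av τ b k (e 1) + ∏ i ∈ Finset.range k, τ (e (i+1)) (e (i+1+1)) ≤ 1 :=
      ih (fun i => e (i+1)) he
    rw [hwt, Av_succ, sum_ite_erase]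
    by_cases hcase : e 1 = b
    · calc (∑ y' ∈ Finset.univ.erase b, τ (e 0) y' * Av τ b k y')
            + τ (e 0) (e 1) * ∏ i ∈ Finset.range k, τ (e (i+1)) (e (i+1+1))
          ≤ (∑ y' ∈ Finset.univ.erase b, τ (e 0) y') + τ (e 0) b * 1 := by
            rw [hcase]
            refine add_le_add ?_ ?_
            · apply Finset.sum_le_sum
              intro y' _
              calc τ (e 0) y' * Av τ b k y' ≤ τ (e 0) y' * 1 := by
                    gcongr; exact Av_le_one τ hτ b k y'
                _ = τ (e 0) y' := mul_one _
            · exact mul_le_mul_right (wt_le_one τ hτ _ _) _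
        _ = τ (e 0) b + ∑ y' ∈ Finset.univ.erase b, τ (e 0) y' := by rw [mul_one, add_comm]
        _ = ∑ y' : Y, τ (e 0) y' := Finset.add_sum_erase _ _ (Finset.mem_univ b)
        _ = 1 := hτ _
    · have hmem : e 1 ∈ Finset.univ.erase b := Finset.mem_erase.mpr ⟨hcase, Finset.mem_univ _⟩
      rw [← Finset.add_sum_erase _ _ hmem]
      calc (τ (e 0) (e 1) * Av τ b k (e 1)
              + ∑ y' ∈ (Finset.univ.erase b).erase (e 1), τ (e 0) y' * Av τ b k y')
            + τ (e 0) (e 1) * ∏ i ∈ Finset.range k, τ (e (i+1)) (e (i+1+1))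
          = τ (e 0) (e 1) * (Av τ b k (e 1) + ∏ i ∈ Finset.range k, τ (e (i+1)) (e (i+1+1)))
              + ∑ y' ∈ (Finset.univ.erase b).erase (e 1), τ (e 0) y' * Av τ b k y' := by ring
        _ ≤ τ (e 0) (e 1) * 1 + ∑ y' ∈ (Finset.univ.erase b).erase (e 1), τ (e 0) y' := by
            refine add_le_add ?_ ?_
            · exact mul_le_mul_right hih _
            · apply Finset.sum_le_sum
              intro y' _
              calc τ (e 0) y' * Av τ b k y' ≤ τ (e 0) y' * 1 := by
                    gcongr; exact Av_le_one τ hτ b k y'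
                _ = τ (e 0) y' := mul_one _
        _ = ∑ y' ∈ Finset.univ.erase b, τ (e 0) y' := by
            rw [mul_one]; exact Finset.add_sum_erase _ _ hmem
        _ ≤ ∑ y' : Y, τ (e 0) y' := Finset.sum_le_sum_of_subset (Finset.subset_univ _)
        _ = 1 := hτ _

lemma exists_path {a c : Y} (hR : Relation.ReflTransGen (fun u v => τ u v ≠ 0) a c) :
    ∃ (k : ℕ) (e : ℕ → Y), e 0 = a ∧ e k = c ∧ ∀ i < k, τ (e i) (e (i+1)) ≠ 0 := by
  induction hR with
  | refl => exact ⟨0, fun _ => a, rfl, rfl, by omega⟩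
  | @tail u v h1 h2 ih =>
    obtain ⟨k, e, h0, hk, hstep⟩ := ih
    refine ⟨k+1, fun i => if i ≤ k then e i else v, ?_, ?_, ?_⟩
    · simp [h0]
    · simp
    · intro i hi
      rcases Nat.lt_or_ge i k with h | h
      · simpa [Nat.le_of_lt h, Nat.succ_le_of_lt h] using hstep i h
      · have : i = k := by omega
        subst this
        simpa [hk, Nat.not_succ_le_self] using h2




def cylFin (n : ℕ) (c : ℕ → Y) : Set (ℕ → Y) := {ω | ∀ i ≤ n, ω i = c i}

noncomputable def W (y : Y) (n : ℕ) (c : ℕ → Y) : ℝ≥0∞ :=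
  if c 0 = y then ∏ i ∈ Finset.range n, τ (c i) (c (i + 1)) else 0

def avoidSet (b : Y) (n k : ℕ) : Set (ℕ → Y) := {ω | ∀ j, n < j → j ≤ n + k → ω j ≠ b}



def extend (n : ℕ) (c : ℕ → Y) (y' : Y) : ℕ → Y := fun i => if i ≤ n then c i else y'

lemma measurableSet_cylFin (n : ℕ) (c : ℕ → Y) : MeasurableSet (cylFin (Y := Y) n c) := by
  have : cylFin (Y := Y) n c = ⋂ (i : ℕ) (_ : i ≤ n), (fun ω : ℕ → Y => ω i) ⁻¹' {c i} := by
    ext ω; simp [cylFin]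
  rw [this]
  exact MeasurableSet.iInter fun i => MeasurableSet.iInter fun _ =>
    (measurable_pi_apply i) (measurableSet_singleton _)

lemma measurableSet_avoidSet (b : Y) (n k : ℕ) : MeasurableSet (avoidSet (Y := Y) b n k) := by
  have : avoidSet (Y := Y) b n k =
      ⋂ (j : ℕ) (_ : n < j) (_ : j ≤ n + k), ((fun ω : ℕ → Y => ω j) ⁻¹' {b})ᶜ := by
    ext ω; simp [avoidSet]
  rw [this]
  exact MeasurableSet.iInter fun j => MeasurableSet.iInter fun _ => MeasurableSet.iInter fun _ =>
    ((measurable_pi_apply j) (measurableSet_singleton _)).compl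

lemma W_extend (y : Y) (n : ℕ) (c : ℕ → Y) (y' : Y) :
    W τ y (n + 1) (extend n c y') = W τ y n c * τ (c n) y' := by
  unfold W extend
  have h0 : (if (0:ℕ) ≤ n then c 0 else y') = c 0 := if_pos (Nat.zero_le n)
  rw [h0]
  by_cases h : c 0 = y
  · rw [if_pos h, if_pos h, Finset.prod_range_succ]
    congr 1
    · apply Finset.prod_congr rfl
      intro i hi
      rw [Finset.mem_range] at hi
      rw [if_pos (Nat.le_of_lt hi), if_pos (Nat.succ_le_of_lt hi)]
    · rw [if_pos (le_refl n), if_neg (Nat.not_succ_le_self n)]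
  · rw [if_neg h, if_neg h, zero_mul]

lemma meas_cyl_avoid (ν : Measure (ℕ → Y)) (y : Y)
    (hcyl : ∀ n c, ν (cylFin n c) = W τ y n c) (b : Y) :
    ∀ (k n : ℕ) (c : ℕ → Y),
      ν (cylFin n c ∩ avoidSet b n k) = W τ y n c * Av τ b k (c n) := by
  intro k
  induction k with
  | zero =>
    intro n c
    have : avoidSet (Y := Y) b n 0 = Set.univ := by
      ext ω; simp only [avoidSet, Set.mem_setOf_eq, Set.mem_univ, iff_true]
      intro j h1 h2; omega
    rw [this, Set.inter_univ, hcyl, Av_zero, mul_one]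
  | succ k ih =>
    intro n c
    have hset : cylFin n c ∩ avoidSet b n (k+1) =
        ⋃ y' : Y, if y' = b then ∅ else
          (cylFin (n+1) (extend n c y') ∩ avoidSet b (n+1) k) := by
      ext ω
      simp only [Set.mem_inter_iff, Set.mem_iUnion]
      constructor
      · rintro ⟨hc, ha⟩
        refine ⟨ω (n+1), ?_⟩
        have hb : ω (n+1) ≠ b := ha (n+1) (Nat.lt_succ_self n) (by omega)
        rw [if_neg hb]
        refine ⟨?_, ?_⟩
        · intro i hi
          rcases Nat.lt_or_ge i (n+1) with h | h
          · have hin : i ≤ n := by omega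
            simp [extend, hin, hc i hin]
          · have : i = n + 1 := by omega
            subst this
            simp [extend]
        · intro j h1 h2
          exact ha j (by omega) (by omega)
      · rintro ⟨y', hy'⟩
        by_cases hb : y' = b
        · rw [if_pos hb] at hy'; exact absurd hy' (Set.notMem_empty ω)
        · rw [if_neg hb] at hy'
          obtain ⟨hc, ha⟩ := hy'
          refine ⟨?_, ?_⟩
          · intro i hi
            have := hc i (by omega)
            rwa [extend, if_pos hi] at this
          · intro j h1 h2
            rcases Nat.lt_or_ge j (n+2) with h | h
            · have : j = n + 1 := by omega
              subst this
              have := hc (n+1) (le_refl _)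
              rw [extend, if_neg (Nat.not_succ_le_self n)] at this
              rw [this]; exact hb
            · exact ha j (by omega) (by omega)
    rw [hset]
    rw [measure_iUnion ?_ ?_]
    · have : ∀ y' : Y, ν (if y' = b then ∅ else
          (cylFin (n+1) (extend n c y') ∩ avoidSet b (n+1) k)) =
          if y' = b then 0 else W τ y n c * (τ (c n) y' * Av τ b k y') := by
        intro y'
        by_cases hb : y' = b
        · simp [hb]
        · rw [if_neg hb, if_neg hb, ih (n+1) (extend n c y'), W_extend]
          have : extend n c y' (n+1) = y' := by rw [extend, if_neg (Nat.not_succ_le_self n)]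
          rw [this, mul_assoc]
      rw [tsum_fintype]
      rw [Finset.sum_congr rfl (fun y' _ => this y')]
      have h2 : ∀ y' : Y, (if y' = b then 0 else W τ y n c * (τ (c n) y' * Av τ b k y'))
          = W τ y n c * (if y' = b then 0 else τ (c n) y' * Av τ b k y') := by
        intro y'; by_cases hb : y' = b <;> simp [hb]
      rw [Finset.sum_congr rfl (fun y' _ => h2 y'), ← Finset.mul_sum, Av_succ]
    · intro y1 y2 h
      simp only [Function.onFun]
      by_cases h1 : y1 = b
      · simp [h1]
      by_cases h2 : y2 = b
      · simp [h2]
      rw [if_neg h1, if_neg h2]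
      apply Set.disjoint_left.mpr
      rintro ω ⟨hc1, _⟩ ⟨hc2, _⟩
      have e1 := hc1 (n+1) (le_refl _)
      have e2 := hc2 (n+1) (le_refl _)
      rw [extend, if_neg (Nat.not_succ_le_self n)] at e1 e2
      exact h (e1 ▸ e2 ▸ rfl)
    · intro y'
      by_cases hb : y' = b
      · simp [hb]
      · rw [if_neg hb]
        exact (measurableSet_cylFin _ _).inter (measurableSet_avoidSet _ _ _)



open scoped Classical

def Good (a b : Y) (k T : ℕ) : ℕ → ℕ → (ℕ → Y) → Prop
  | 0, n, _ => n = T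
  | (m+1), n, ω => ∃ n₀, Good a b k T m n₀ ω ∧ n₀ + k ≤ n ∧ ω n = a ∧
      (∀ j, n₀ < j → j ≤ n → ω j ≠ b) ∧ (∀ j, n₀ + k ≤ j → j < n → ω j ≠ a)

lemma good_zero {a b : Y} {k T n : ℕ} {ω : ℕ → Y} : Good a b k T 0 n ω ↔ n = T := Iff.rfl

lemma good_succ {a b : Y} {k T m n : ℕ} {ω : ℕ → Y} :
    Good a b k T (m+1) n ω ↔ ∃ n₀, Good a b k T m n₀ ω ∧ n₀ + k ≤ n ∧ ω n = a ∧
      (∀ j, n₀ < j → j ≤ n → ω j ≠ b) ∧ (∀ j, n₀ + k ≤ j → j < n → ω j ≠ a) := Iff.rfl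

lemma good_le {a b : Y} {k T m n : ℕ} {ω : ℕ → Y} (h : Good a b k T m n ω) : T ≤ n := by
  induction m generalizing n with
  | zero => rw [good_zero] at h; omega
  | succ m ih =>
    obtain ⟨n₀, g₀, h1, -⟩ := h
    have := ih g₀
    omega

lemma good_prefix {a b : Y} {k T m n : ℕ} {ω ω' : ℕ → Y}
    (hag : ∀ i ≤ n, ω i = ω' i) (h : Good a b k T m n ω) : Good a b k T m n ω' := by
  induction m generalizing n with
  | zero => exact h
  | succ m ih =>
    obtain ⟨n₀, g₀, h1, h2, h3, h4⟩ := h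
    refine ⟨n₀, ih (fun i hi => hag i (by omega)) g₀, h1, by rw [← hag n le_rfl]; exact h2,
      fun j hj1 hj2 => by rw [← hag j hj2]; exact h3 j hj1 hj2,
      fun j hj1 hj2 => by rw [← hag j (by omega)]; exact h4 j hj1 hj2⟩

lemma good_unique {a b : Y} {k T m n n' : ℕ} {ω : ℕ → Y}
    (h : Good a b k T m n ω) (h' : Good a b k T m n' ω) : n = n' := by
  induction m generalizing n n' with
  | zero => rw [good_zero] at h h'; omega
  | succ m ih =>
    obtain ⟨n₀, g₀, h1, h2, h3, h4⟩ := h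
    obtain ⟨n₀', g₀', h1', h2', h3', h4'⟩ := h'
    have hn₀ : n₀ = n₀' := ih g₀ g₀'
    subst hn₀
    rcases lt_trichotomy n n' with hlt | heq | hgt
    · exact absurd h2 (h4' n h1 hlt)
    · exact heq
    · exact absurd h2' (h4 n' h1' hgt)

def V (a b : Y) (k T m : ℕ) : Set (ℕ → Y) := {ω | ∃ n, Good a b k T m n ω}

def ext' (n : ℕ) (c : Fin (n+1) → Y) : ℕ → Y :=
  fun i => c ⟨min i n, Nat.lt_succ_of_le (min_le_right i n)⟩

lemma ext'_eq {i n : ℕ} (c : Fin (n+1) → Y) (h : i ≤ n) :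
    ext' n c i = c ⟨i, Nat.lt_succ_of_le h⟩ := by
  unfold ext'
  congr 1
  exact Fin.ext (Nat.min_eq_left h)

lemma ext'_restrict (ω : ℕ → Y) (n : ℕ) :
    ∀ i ≤ n, ext' n (fun j : Fin (n+1) => ω j) i = ω i := by
  intro i hi
  rw [ext'_eq _ hi]

def DD (a b : Y) (k T m : ℕ) : (Σ n : ℕ, Fin (n+1) → Y) → Set (ℕ → Y) :=
  fun p => if Good a b k T m p.1 (ext' p.1 p.2) then cylFin p.1 (ext' p.1 p.2) else ∅

lemma V_eq_iUnion (a b : Y) (k T m : ℕ) :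
    V a b k T m = ⋃ p : Σ n : ℕ, Fin (n+1) → Y, DD a b k T m p := by
  ext ω
  simp only [V, Set.mem_setOf_eq, Set.mem_iUnion]
  constructor
  · rintro ⟨n, hn⟩
    refine ⟨⟨n, fun j => ω j⟩, ?_⟩
    unfold DD
    rw [if_pos (good_prefix (fun i hi => (ext'_restrict ω n i hi).symm) hn)]
    intro i hi
    exact (ext'_restrict ω n i hi).symm
  · rintro ⟨p, hp⟩
    unfold DD at hp
    split_ifs at hp with hg
    · exact ⟨p.1, good_prefix (fun i hi => (hp i hi).symm) hg⟩
    · exact absurd hp (Set.notMem_empty ω)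

lemma DD_disjoint (a b : Y) (k T m : ℕ) : Pairwise (Function.onFun Disjoint (DD a b k T m)) := by
  rintro ⟨n1, c1⟩ ⟨n2, c2⟩ hpq
  simp only [Function.onFun, DD]
  split_ifs with h1 h2 h2
  · apply Set.disjoint_left.mpr
    intro ω hω1 hω2
    have g1 : Good a b k T m n1 ω := good_prefix (fun i hi => (hω1 i hi).symm) h1
    have g2 : Good a b k T m n2 ω := good_prefix (fun i hi => (hω2 i hi).symm) h2
    have hn : n1 = n2 := good_unique g1 g2
    subst hn
    apply hpq
    have hc : c1 = c2 := by
      funext j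
      have e1 := hω1 j (Nat.lt_succ_iff.mp j.2)
      have e2 := hω2 j (Nat.lt_succ_iff.mp j.2)
      rw [ext'_eq _ (Nat.lt_succ_iff.mp j.2)] at e1 e2
      rw [Fin.eta] at e1 e2
      rw [← e1, ← e2]
    rw [hc]
  all_goals simp

lemma DD_measurable (a b : Y) (k T m : ℕ) (p : Σ n : ℕ, Fin (n+1) → Y) :
    MeasurableSet (DD a b k T m p) := by
  unfold DD
  split_ifs
  · exact measurableSet_cylFin _ _
  · exact MeasurableSet.empty

lemma meas_V (ν : Measure (ℕ → Y)) (a b : Y) (k T m : ℕ) :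
    ν (V a b k T m) = ∑' p : Σ n : ℕ, Fin (n+1) → Y, ν (DD a b k T m p) := by
  rw [V_eq_iUnion, measure_iUnion (DD_disjoint a b k T m) (DD_measurable a b k T m)]

lemma V_succ_subset (a b : Y) (k T m : ℕ) :
    V a b k T (m+1) ⊆ ⋃ p : Σ n : ℕ, Fin (n+1) → Y,
      (if Good a b k T m p.1 (ext' p.1 p.2) then
        cylFin p.1 (ext' p.1 p.2) ∩ avoidSet b p.1 k else ∅) := by
  rintro ω ⟨n, n₀, g₀, h1, h2, h3, h4⟩
  rw [Set.mem_iUnion]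
  refine ⟨⟨n₀, fun j => ω j⟩, ?_⟩
  dsimp only
  rw [if_pos (good_prefix (fun i hi => (ext'_restrict ω n₀ i hi).symm) g₀)]
  constructor
  · intro i hi
    exact (ext'_restrict ω n₀ i hi).symm
  · intro j hj1 hj2
    exact h3 j hj1 (by omega)

lemma meas_V_step (ν : Measure (ℕ → Y)) (y : Y)
    (hcyl : ∀ n c, ν (cylFin n c) = W τ y n c) (a b : Y) (k T m : ℕ) :
    ν (V a b k T (m+2)) ≤ Av τ b k a * ν (V a b k T (m+1)) := by
  calc ν (V a b k T (m+2))
      ≤ ∑' p : Σ n : ℕ, Fin (n+1) → Y,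
          ν (if Good a b k T (m+1) p.1 (ext' p.1 p.2) then
            cylFin p.1 (ext' p.1 p.2) ∩ avoidSet b p.1 k else ∅) :=
        (measure_mono (V_succ_subset a b k T (m+1))).trans (measure_iUnion_le _)
    _ ≤ ∑' p : Σ n : ℕ, Fin (n+1) → Y, Av τ b k a * ν (DD a b k T (m+1) p) := by
        apply ENNReal.tsum_le_tsum
        intro p
        by_cases hg : Good a b k T (m+1) p.1 (ext' p.1 p.2)
        · rw [if_pos hg, meas_cyl_avoid τ ν y hcyl b k p.1 (ext' p.1 p.2)]
          have ha : ext' p.1 p.2 p.1 = a := by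
            obtain ⟨n₀, -, -, h2, -⟩ := hg
            exact h2
          rw [ha, DD, if_pos hg, hcyl, mul_comm]
        · rw [if_neg hg]
          simp
    _ = Av τ b k a * ν (V a b k T (m+1)) := by
        rw [ENNReal.tsum_mul_left, meas_V]

def Bad (a b : Y) (T : ℕ) : Set (ℕ → Y) :=
  {ω | (∀ N, ∃ i, N ≤ i ∧ ω i = a) ∧ (∀ j, T < j → ω j ≠ b)}

lemma Bad_subset_V (a b : Y) (k T m : ℕ) : Bad a b T ⊆ V a b k T m := by
  rintro ω ⟨hio, hnb⟩
  induction m with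
  | zero => exact ⟨T, rfl⟩
  | succ m ih =>
    obtain ⟨n₀, g₀⟩ := ih
    have hex : ∃ i, n₀ + k ≤ i ∧ ω i = a := hio (n₀ + k)
    refine ⟨Nat.find hex, n₀, g₀, (Nat.find_spec hex).1, (Nat.find_spec hex).2, ?_, ?_⟩
    · intro j hj1 hj2
      have := good_le g₀
      exact hnb j (by omega)
    · intro j hj1 hj2
      have := Nat.find_min hex hj2
      intro hja
      exact this ⟨hj1, hja⟩

lemma bad_null (ν : Measure (ℕ → Y)) [IsProbabilityMeasure ν] (y : Y)
    (hcyl : ∀ n c, ν (cylFin n c) = W τ y n c)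
    (hτ : ∀ y, ∑ y' : Y, τ y y' = 1) {a b : Y}
    (hR : Relation.ReflTransGen (fun u v => τ u v ≠ 0) a b) (hab : a ≠ b) (T : ℕ) :
    ν (Bad a b T) = 0 := by
  obtain ⟨k, e, he0, hek, hsteps⟩ := exists_path τ hR
  have hk1 : 1 ≤ k := by
    rcases Nat.eq_zero_or_pos k with h | h
    · subst h; rw [he0] at hek; exact absurd hek hab
    · exact h
  set p := ∏ i ∈ Finset.range k, τ (e i) (e (i+1)) with hp
  have hp0 : p ≠ 0 := by
    rw [hp, Finset.prod_ne_zero_iff]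
    intro i hi
    exact hsteps i (Finset.mem_range.mp hi)
  have hkey : Av τ b k a + p ≤ 1 := by
    rw [← he0]
    exact av_add_wt_le_one τ hτ b k hk1 e hek
  have hAv : Av τ b k a ≤ 1 - p := ENNReal.le_sub_of_add_le_right (by
    intro hptop
    rw [hptop] at hkey
    simp at hkey) hkey
  have hq1 : (1 : ℝ≥0∞) - p < 1 := ENNReal.sub_lt_self ENNReal.one_ne_top one_ne_zero hp0
  have hmono : ∀ m, ν (V a b k T (m+1)) ≤ (1 - p) ^ m := by
    intro m
    induction m with
    | zero => simpa using prob_le_one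
    | succ m ih =>
      calc ν (V a b k T (m+2)) ≤ Av τ b k a * ν (V a b k T (m+1)) :=
            meas_V_step τ ν y hcyl a b k T m
        _ ≤ (1 - p) * (1 - p) ^ m := mul_le_mul' hAv ih
        _ = (1 - p) ^ (m + 1) := (pow_succ' _ _).symm
  have hbound : ∀ m, ν (Bad a b T) ≤ (1 - p) ^ m := fun m =>
    (measure_mono (Bad_subset_V a b k T (m+1))).trans (hmono m)
  have h0 : ν (Bad a b T) ≤ 0 :=
    ge_of_tendsto' (ENNReal.tendsto_pow_atTop_nhds_zero_of_lt_one hq1) hbound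
  exact le_antisymm h0 zero_le

lemma step_null (ν : Measure (ℕ → Y)) (y : Y)
    (hcyl : ∀ n c, ν (cylFin n c) = W τ y n c) {a b : Y} (hz : τ a b = 0) (i : ℕ) :
    ν {ω | ω i = a ∧ ω (i+1) = b} = 0 := by
  have hsub : {ω : ℕ → Y | ω i = a ∧ ω (i+1) = b} ⊆
      ⋃ c : Fin (i+1+1) → Y, (if (ext' (i+1) c) i = a ∧ (ext' (i+1) c) (i+1) = b
        then cylFin (i+1) (ext' (i+1) c) else ∅) := by
    rintro ω ⟨ha, hb⟩
    rw [Set.mem_iUnion]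
    refine ⟨fun j => ω j, ?_⟩
    rw [if_pos ⟨by rw [ext'_restrict ω (i+1) i (by omega)]; exact ha,
        by rw [ext'_restrict ω (i+1) (i+1) le_rfl]; exact hb⟩]
    intro j hj
    exact (ext'_restrict ω (i+1) j hj).symm
  have hz2 : ∀ c : Fin (i+1+1) → Y,
      ν (if (ext' (i+1) c) i = a ∧ (ext' (i+1) c) (i+1) = b
        then cylFin (i+1) (ext' (i+1) c) else ∅) = 0 := by
    intro c
    split_ifs with h
    · rw [hcyl, W]
      split_ifs with h0
      · apply Finset.prod_eq_zero (Finset.mem_range.mpr (Nat.lt_succ_self i))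
        rw [h.1, h.2, hz]
      · rfl
    · exact measure_empty
  refine le_antisymm (le_trans ((measure_mono hsub).trans (measure_iUnion_le _)) ?_) zero_le
  exact le_of_eq (ENNReal.tsum_eq_zero.mpr hz2)

lemma exists_infinite_occ (ω : ℕ → Y) : ∃ s : Y, {i | ω i = s}.Infinite := by
  by_contra h
  push_neg at h
  have huniv : (Set.univ : Set ℕ) = ⋃ s : Y, {i | ω i = s} := by
    ext i; simp
  have : (Set.univ : Set ℕ).Finite := by
    rw [huniv]
    exact Set.finite_iUnion (fun s => h s)
  exact Set.infinite_univ this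

lemma infinite_mem_iff (ω : ℕ → Y) (F : Set Y) :
    {i | ω i ∈ F}.Infinite ↔ ∃ s ∈ F, {i | ω i = s}.Infinite := by
  constructor
  · intro h
    by_contra hc
    push_neg at hc
    apply h
    have hsub : {i | ω i ∈ F} ⊆ ⋃ s : Y, {i | ω i = s ∧ s ∈ F} := by
      intro i hi
      simp only [Set.mem_iUnion, Set.mem_setOf_eq]
      exact ⟨ω i, rfl, hi⟩
    refine Set.Finite.subset (Set.finite_iUnion fun s => ?_) hsub
    by_cases hs : s ∈ F
    · exact ((hc s hs).subset (fun i hi => hi.1))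
    · have : {i | ω i = s ∧ s ∈ F} = ∅ := by ext i; simp [hs]
      rw [this]; exact Set.finite_empty
  · rintro ⟨s, hsF, hs⟩
    exact hs.mono (fun i hi => by rw [Set.mem_setOf_eq] at hi ⊢; rw [hi]; exact hsF)

lemma rtg_of_path {ω : ℕ → Y} (hpos : ∀ i, τ (ω i) (ω (i+1)) ≠ 0) {i j : ℕ} (h : i ≤ j) :
    Relation.ReflTransGen (fun u v => τ u v ≠ 0) (ω i) (ω j) := by
  induction j, h using Nat.le_induction with
  | base => exact Relation.ReflTransGen.refl
  | succ j hij ih => exact ih.tail (hpos j)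

end MC14

open MC14

/-- `B` is a bottom strongly connected component of the Markov chain with transition
probabilities `τ`: every pair of states in `B` is mutually reachable via
positive-probability transitions, and `B` has no outgoing transitions. -/
def IsBSCC {Y : Type*} (τ : Y → Y → ℝ≥0∞) (B : Set Y) : Prop :=
  (∀ y ∈ B, ∀ y' ∈ B, Relation.ReflTransGen (fun a b => τ a b ≠ 0) y y') ∧
  (∀ y ∈ B, ∀ y', y' ∉ B → τ y y' = 0)

/-- In a finite Markov chain (with path measures `μ y` determined on cylinders by the
transition probabilities `τ`), the probability from any state `y` of visiting a set `F`
infinitely often (`GF F`) equals the probability of eventually reaching (`F U`) the union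
`U` of all bottom strongly connected components meeting `F`. -/
theorem stmt14 {Y : Type*} [Fintype Y] [DecidableEq Y]
    (τ : Y → Y → ℝ≥0∞) (hτ : ∀ y, ∑ y' : Y, τ y y' = 1)
    (μ : Y → @MeasureTheory.Measure (ℕ → Y)
      (@MeasurableSpace.pi ℕ (fun _ => Y) (fun _ => ⊤)))
    (hprob : ∀ y, MeasureTheory.IsProbabilityMeasure (μ y))
    (hcyl : ∀ (y : Y) (n : ℕ) (c : ℕ → Y),
      μ y {ω | ∀ i ≤ n, ω i = c i} =
        if c 0 = y then ∏ i ∈ Finset.range n, τ (c i) (c (i + 1)) else 0)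
    (F : Set Y) (y : Y) :
    μ y {ω | {i : ℕ | ω i ∈ F}.Infinite} =
      μ y {ω | ∃ i : ℕ, ω i ∈ ⋃ B ∈ {B : Set Y | IsBSCC τ B ∧ (B ∩ F).Nonempty}, B} := by
  classical
  letI : MeasurableSpace Y := ⊤
  haveI : MeasurableSingletonClass Y := ⟨fun _ => trivial⟩
  set ν : MeasureTheory.Measure (ℕ → Y) := μ y with hν
  haveI : MeasureTheory.IsProbabilityMeasure ν := hprob y
  have hcylν : ∀ (n : ℕ) (c : ℕ → Y), ν (cylFin n c) = W τ y n c := fun n c => hcyl y n c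
  -- null set 1 : some zero-probability transition is taken
  set M1 : Set (ℕ → Y) :=
    ⋃ q : ℕ × Y × Y, {ω : ℕ → Y | τ q.2.1 q.2.2 = 0 ∧ ω q.1 = q.2.1 ∧ ω (q.1+1) = q.2.2}
    with hM1def
  have hM1 : ν M1 = 0 := by
    apply MeasureTheory.measure_iUnion_null
    intro q
    by_cases hz : τ q.2.1 q.2.2 = 0
    · refine MeasureTheory.measure_mono_null ?_ (step_null τ ν y hcylν hz q.1)
      intro ω hω
      exact ⟨hω.2.1, hω.2.2⟩
    · have : {ω : ℕ → Y | τ q.2.1 q.2.2 = 0 ∧ ω q.1 = q.2.1 ∧ ω (q.1+1) = q.2.2} = ∅ := by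
        ext ω; simp [hz]
      rw [this]; exact MeasureTheory.measure_empty
  -- null set 2 : some state visited i.o. while a reachable state is avoided
  set M2 : Set (ℕ → Y) :=
    ⋃ q : Y × Y × ℕ, {ω : ℕ → Y |
      (q.1 ≠ q.2.1 ∧ Relation.ReflTransGen (fun u v => τ u v ≠ 0) q.1 q.2.1) ∧
        ω ∈ Bad q.1 q.2.1 q.2.2} with hM2def
  have hM2 : ν M2 = 0 := by
    apply MeasureTheory.measure_iUnion_null
    intro q
    by_cases hcond : q.1 ≠ q.2.1 ∧ Relation.ReflTransGen (fun u v => τ u v ≠ 0) q.1 q.2.1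
    · refine MeasureTheory.measure_mono_null ?_ (bad_null τ ν y hcylν hτ hcond.2 hcond.1 q.2.2)
      intro ω hω
      exact hω.2
    · have : {ω : ℕ → Y |
          (q.1 ≠ q.2.1 ∧ Relation.ReflTransGen (fun u v => τ u v ≠ 0) q.1 q.2.1) ∧
            ω ∈ Bad q.1 q.2.1 q.2.2} = ∅ := by
        ext ω; simp only [Set.mem_setOf_eq, Set.mem_empty_iff_false, iff_false]
        intro hω; exact hcond hω.1
      rw [this]; exact MeasureTheory.measure_empty
  have hM : ν (M1 ∪ M2) = 0 := MeasureTheory.measure_union_null hM1 hM2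
  -- pointwise equivalence outside the null set
  have hiff : ∀ ω : ℕ → Y, ω ∉ M1 ∪ M2 →
      ({i : ℕ | ω i ∈ F}.Infinite ↔
        ∃ i : ℕ, ω i ∈ ⋃ B ∈ {B : Set Y | IsBSCC τ B ∧ (B ∩ F).Nonempty}, B) := by
    intro ω hω
    have hωM1 : ω ∉ M1 := fun h => hω (Set.mem_union_left _ h)
    have hωM2 : ω ∉ M2 := fun h => hω (Set.mem_union_right _ h)
    have hpos : ∀ i, τ (ω i) (ω (i+1)) ≠ 0 := by
      intro i hz
      exact hωM1 (Set.mem_iUnion.mpr ⟨⟨i, ω i, ω (i+1)⟩, hz, rfl, rfl⟩)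
    have hclose : ∀ u v : Y, {i | ω i = u}.Infinite →
        Relation.ReflTransGen (fun s t => τ s t ≠ 0) u v → {i | ω i = v}.Infinite := by
      intro u v hu hR
      by_contra hv
      have huv : u ≠ v := by rintro rfl; exact hv hu
      obtain ⟨T, hT⟩ := (Set.not_infinite.mp hv).bddAbove
      apply hωM2
      refine Set.mem_iUnion.mpr ⟨⟨u, v, T⟩, ⟨huv, hR⟩, ?_, ?_⟩
      · intro N
        obtain ⟨i, hi, hNi⟩ := hu.exists_gt N
        exact ⟨i, le_of_lt hNi, hi⟩
      · intro j hj hjv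
        exact absurd (hT hjv) (not_le.mpr hj)
    have hUmem : ∀ s : Y,
        s ∈ (⋃ B ∈ {B : Set Y | IsBSCC τ B ∧ (B ∩ F).Nonempty}, B) ↔
          ∃ B : Set Y, (IsBSCC τ B ∧ (B ∩ F).Nonempty) ∧ s ∈ B := by
      intro s
      simp only [Set.mem_iUnion, Set.mem_setOf_eq, exists_prop]
    constructor
    · intro h1
      obtain ⟨s, hsF, hs⟩ := (infinite_mem_iff ω F).mp h1
      set occ : Set Y := {t : Y | {i | ω i = t}.Infinite} with hoccdef
      have hBSCC : IsBSCC τ occ := by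
        constructor
        · intro u hu v hv
          obtain ⟨i, hi⟩ := hu.nonempty
          obtain ⟨j, hj, hij⟩ := hv.exists_gt i
          have := rtg_of_path τ hpos (le_of_lt hij)
          rwa [Set.mem_setOf_eq.mp hi, Set.mem_setOf_eq.mp hj] at this
        · intro u hu v hv
          by_contra hnz
          exact hv (hclose u v hu (Relation.ReflTransGen.single hnz))
      obtain ⟨i, hi⟩ := hs.nonempty
      refine ⟨i, (hUmem (ω i)).mpr ⟨occ, ⟨hBSCC, ⟨s, hs, hsF⟩⟩, ?_⟩⟩
      rw [Set.mem_setOf_eq.mp hi]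
      exact hs
    · rintro ⟨i, hi⟩
      obtain ⟨B, ⟨hB, f, hfB, hfF⟩, hωiB⟩ := (hUmem (ω i)).mp hi
      have hstay : ∀ j, i ≤ j → ω j ∈ B := by
        intro j hj
        induction j, hj using Nat.le_induction with
        | base => exact hωiB
        | succ j hij ih =>
          by_contra hout
          exact hpos j (hB.2 (ω j) ih (ω (j+1)) hout)
      obtain ⟨s, hs⟩ := exists_infinite_occ ω
      have hsB : s ∈ B := by
        obtain ⟨j, hj, hij⟩ := hs.exists_gt i
        rw [← Set.mem_setOf_eq.mp hj]
        exact hstay j (le_of_lt hij)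
      have hf : {i | ω i = f}.Infinite := hclose s f hs (hB.1 s hsB f hfB)
      exact (infinite_mem_iff ω F).mpr ⟨f, hfF, hf⟩
  -- conclude
  apply MeasureTheory.measure_congr
  rw [Filter.eventuallyEq_set]
  have hae : ∀ᵐ ω ∂ν, ω ∉ M1 ∪ M2 :=
    (MeasureTheory.measure_eq_zero_iff_ae_notMem).mp hM
  exact hae.mono hiff
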